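/- Let 𝔽_q be a finite field with q elements and n ≥ 2. The least possible number of elements of a separating set for the symmetric polynomials in n variables over 𝔽_q equals γ_q(n) = ⌈log_q ((n+q−1)(n+q−2)⋯(n+1) / (q−1)!)⌉ = ⌈log_q binom(n+q−1, q−1)⌉. -/

import Mathlib

/-- A set `S` of polynomials in `n` variables over `F` is a separating set for the
symmetric polynomials if it consists of symmetric polynomials and whenever two points
`u, v : Fin n → F` are separated by some symmetric polynomial, they are separated by
some element of `S`. -/
def IsSeparatingSet {F : Type*} [CommSemiring F] {n : ℕ}
    (S : Set (MvPolynomial (Fin n) F)) : Prop :=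
  (∀ f ∈ S, f.IsSymmetric) ∧
  ∀ u v : Fin n → F,
    (∃ f : MvPolynomial (Fin n) F, f.IsSymmetric ∧
        MvPolynomial.eval u f ≠ MvPolynomial.eval v f) →
    ∃ f ∈ S, MvPolynomial.eval u f ≠ MvPolynomial.eval v f

/-- `S(n)`, the set of the elementary symmetric polynomials `s_1, …, s_n`
in `n` variables over `F`. -/
def elemSymmSet (F : Type*) [CommSemiring F] (n : ℕ) : Set (MvPolynomial (Fin n) F) :=
  {f | ∃ t : ℕ, 1 ≤ t ∧ t ≤ n ∧ f = MvPolynomial.esymm (Fin n) F t}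


open MvPolynomial

noncomputable section AuxSep

variable {F : Type} [Field F] [Fintype F] {n : ℕ}

/-- the multiset of coordinates of a tuple -/
def msOf (u : Fin n → F) : Multiset F := Multiset.map u Finset.univ.val

lemma msOf_eq_coe (u : Fin n → F) : msOf u = (List.ofFn u : Multiset F) := by
  simpa [msOf] using Fin.univ_val_map u

lemma msOf_card (u : Fin n → F) : Multiset.card (msOf u) = n := by
  simp [msOf]

lemma msOf_comp_perm (u : Fin n → F) (σ : Equiv.Perm (Fin n)) : msOf (u ∘ σ) = msOf u := by
  rw [msOf_eq_coe, msOf_eq_coe, Multiset.coe_eq_coe]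
  exact σ.ofFn_comp_perm u

lemma exists_perm_of_msOf_eq {u v : Fin n → F} (h : msOf u = msOf v) :
    ∃ σ : Equiv.Perm (Fin n), u = v ∘ σ := by
  letI : LinearOrder F := LinearOrder.lift' (Fintype.equivFin F) (Equiv.injective _)
  rw [msOf_eq_coe, msOf_eq_coe, Multiset.coe_eq_coe] at h
  have h1 : List.ofFn (u ∘ Tuple.sort u) = List.ofFn (v ∘ Tuple.sort v) :=
    List.Perm.eq_of_pairwise'
      (Tuple.monotone_sort u).sortedLE_ofFn.pairwise (Tuple.monotone_sort v).sortedLE_ofFn.pairwise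
      (((Tuple.sort u).ofFn_comp_perm u).trans (h.trans ((Tuple.sort v).ofFn_comp_perm v).symm))
  have h2 : u ∘ Tuple.sort u = v ∘ Tuple.sort v := List.ofFn_injective h1
  refine ⟨(Tuple.sort u).symm.trans (Tuple.sort v), funext fun i => ?_⟩
  have h3 := congrFun h2 ((Tuple.sort u).symm i)
  simpa using h3

lemma IsSymmetric.eval_comp_perm' {f : MvPolynomial (Fin n) F} (hf : f.IsSymmetric)
    (v : Fin n → F) (σ : Equiv.Perm (Fin n)) :
    eval (v ∘ σ) f = eval v f := by
  conv_rhs => rw [← hf σ]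
  rw [eval_rename]

lemma eval_esymm_eq (u : Fin n → F) (t : ℕ) :
    eval u (esymm (Fin n) F t) = (msOf u).esymm t := by
  rw [esymm, map_sum, msOf, Finset.esymm_map_val]
  refine Finset.sum_congr rfl fun s _ => ?_
  rw [map_prod]
  exact Finset.prod_congr rfl fun i _ => eval_X _

lemma msOf_eq_of_esymm_eq {u v : Fin n → F}
    (h : ∀ t, 1 ≤ t → t ≤ n → eval u (esymm (Fin n) F t) = eval v (esymm (Fin n) F t)) :
    msOf u = msOf v := by
  have hprod : ((msOf u).map fun a => Polynomial.X + Polynomial.C a).prod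
      = ((msOf v).map fun a => Polynomial.X + Polynomial.C a).prod := by
    rw [Multiset.prod_X_add_C_eq_sum_esymm, Multiset.prod_X_add_C_eq_sum_esymm,
      msOf_card, msOf_card]
    refine Finset.sum_congr rfl fun j hj => ?_
    rcases Nat.eq_zero_or_pos j with h0 | h1
    · subst h0; simp [Multiset.esymm]
    · have hj' : j ≤ n := by
        have := Finset.mem_range.mp hj; omega
      rw [← eval_esymm_eq, ← eval_esymm_eq, h j h1 hj']
  have key : ∀ s : Multiset F, (s.map fun a => Polynomial.X + Polynomial.C a).prod
      = ((s.map fun a : F => -a).map fun a => Polynomial.X - Polynomial.C a).prod := by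
    intro s
    rw [Multiset.map_map]
    congr 1
    refine Multiset.map_congr rfl fun a _ => ?_
    simp [sub_neg_eq_add]
  rw [key, key] at hprod
  have hroots := congrArg Polynomial.roots hprod
  rw [Polynomial.roots_multiset_prod_X_sub_C, Polynomial.roots_multiset_prod_X_sub_C] at hroots
  exact Multiset.map_injective (show Function.Injective (fun a : F => -a) from neg_injective) hroots

end AuxSep

noncomputable section Aux2

variable {F : Type} [Field F] [Fintype F] {n : ℕ}

lemma rename_indicator (σe : Equiv.Perm (Fin n)) (a : Fin n → F) :
    rename σe (indicator a) = indicator (a ∘ σe.symm) := by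
  rw [indicator, map_prod]
  simp only [map_sub, map_one, map_pow, rename_X, rename_C]
  calc (∏ i, (1 - (X (σe i) - C (a i)) ^ (Fintype.card F - 1)))
      = ∏ i, (fun j => 1 - (X j - C (a (σe.symm j))) ^ (Fintype.card F - 1)) (σe i) := by
        refine Finset.prod_congr rfl fun i _ => by simp
    _ = ∏ j, (1 - (X j - C (a (σe.symm j))) ^ (Fintype.card F - 1)) :=
        Equiv.prod_comp σe (fun j => 1 - (X j - C (a (σe.symm j))) ^ (Fintype.card F - 1))
    _ = indicator (a ∘ σe.symm) := by rw [indicator]; rfl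

/-- the polynomial computing `g`, as a sum of indicator polynomials -/
def polyOf (g : (Fin n → F) → F) : MvPolynomial (Fin n) F :=
  ∑ a : Fin n → F, indicator a * C (g a)

lemma eval_polyOf (g : (Fin n → F) → F) (b : Fin n → F) : eval b (polyOf g) = g b := by
  rw [polyOf, map_sum, Finset.sum_eq_single b]
  · rw [map_mul, eval_indicator_apply_eq_one, eval_C, one_mul]
  · intro a _ hab
    rw [map_mul, eval_indicator_apply_eq_zero b a hab.symm, zero_mul]
  · intro hb; exact absurd (Finset.mem_univ b) hb

lemma polyOf_symmetric (g : (Fin n → F) → F)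
    (hg : ∀ (σ : Equiv.Perm (Fin n)) (u : Fin n → F), g (u ∘ σ) = g u) :
    (polyOf g).IsSymmetric := by
  intro σe
  rw [polyOf, map_sum]
  simp only [map_mul, rename_C, rename_indicator]
  calc (∑ a : Fin n → F, indicator (a ∘ σe.symm) * C (g a))
      = ∑ a : Fin n → F,
          (fun b => indicator b * C (g b)) ((Equiv.arrowCongr σe (Equiv.refl F)) a) := by
        refine Finset.sum_congr rfl fun a _ => ?_
        have h2 : g (a ∘ σe.symm) = g a := hg σe.symm a
        show indicator (a ∘ σe.symm) * C (g a)
            = indicator ((Equiv.arrowCongr σe (Equiv.refl F)) a)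
              * C (g ((Equiv.arrowCongr σe (Equiv.refl F)) a))
        have h1 : (Equiv.arrowCongr σe (Equiv.refl F)) a = a ∘ σe.symm := rfl
        rw [h1, h2]
    _ = ∑ b : Fin n → F, indicator b * C (g b) :=
        Equiv.sum_comp (Equiv.arrowCongr σe (Equiv.refl F)) (fun b => indicator b * C (g b))

/-- the tuple-to-multiset map, into `Sym` -/
def tupleSym (u : Fin n → F) : Sym F n := ⟨msOf u, msOf_card u⟩

lemma tupleSym_comp_perm (u : Fin n → F) (σ : Equiv.Perm (Fin n)) :
    tupleSym (u ∘ σ) = tupleSym u :=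
  Subtype.ext (msOf_comp_perm u σ)

lemma tupleSym_surjective : Function.Surjective (tupleSym (F := F) (n := n)) := by
  rintro ⟨s, hs⟩
  induction s using Quotient.inductionOn with
  | h l =>
    have hlen : l.length = n := by simpa using hs
    refine ⟨fun i => l.get (Fin.cast hlen.symm i), Subtype.ext ?_⟩
    show msOf _ = (l : Multiset F)
    rw [msOf_eq_coe, Multiset.coe_eq_coe]
    subst hlen
    simp [List.ofFn_get]

end Aux2

theorem stmt_19 (q n : ℕ) (hn : 2 ≤ n) (F : Type) [Field F] [Fintype F]
    (hF : Fintype.card F = q) :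
    (∃ S : Set (MvPolynomial (Fin n) F), IsSeparatingSet S ∧ S.Finite ∧
      (S.ncard : ℤ) = ⌈Real.logb q (Nat.choose (n + q - 1) (q - 1))⌉) ∧
    ∀ S : Set (MvPolynomial (Fin n) F), IsSeparatingSet S → S.Finite →
      ⌈Real.logb q (Nat.choose (n + q - 1) (q - 1))⌉ ≤ (S.ncard : ℤ) := by
  classical
  have hq2 : 2 ≤ q := by rw [← hF]; exact Fintype.one_lt_card
  set N : ℕ := (n + q - 1).choose (q - 1) with hNdef
  have hcardSym : Fintype.card (Sym F n) = N := by
    rw [Sym.card_sym_eq_choose, hF]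
    have h1 : q + n - 1 = n + q - 1 := by omega
    have h2 : q - 1 ≤ n + q - 1 := by omega
    have h3 : n + q - 1 - (q - 1) = n := by omega
    rw [h1, hNdef, ← Nat.choose_symm h2, h3]
  have hN2 : 2 ≤ N := by
    rw [← hcardSym]
    obtain ⟨a, b, hab⟩ := exists_pair_ne F
    refine Fintype.one_lt_card_iff.mpr ⟨tupleSym (fun _ => a), tupleSym (fun _ => b), ?_⟩
    intro hcon
    have hmm : msOf (fun _ : Fin n => a) = msOf (fun _ : Fin n => b) :=
      congrArg Sym.toMultiset hcon
    have hmem : a ∈ msOf (fun _ : Fin n => a) := by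
      rw [msOf]
      exact Multiset.mem_map.mpr ⟨⟨0, by omega⟩, by simp, rfl⟩
    rw [hmm, msOf] at hmem
    obtain ⟨i, _, hi⟩ := Multiset.mem_map.mp hmem
    exact hab hi.symm
  set x : ℝ := Real.logb q N with hxdef
  have hbR : (1:ℝ) < (q:ℝ) := by exact_mod_cast hq2
  have hNR : (1:ℝ) < (N:ℝ) := by exact_mod_cast hN2
  have hxpos : 0 < x := Real.logb_pos hbR hNR
  set k : ℤ := ⌈x⌉ with hkdef
  have hk1 : 1 ≤ k := by
    have := Int.ceil_pos.mpr hxpos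
    omega
  set k₀ : ℕ := k.toNat with hk0def
  have hk0k : (k₀ : ℤ) = k := Int.toNat_of_nonneg (by omega)
  have hk01 : 1 ≤ k₀ := by omega
  have hk0R : (k₀ : ℝ) = (k : ℝ) := by exact_mod_cast hk0k
  have hxk : x ≤ (k₀ : ℝ) := by rw [hk0R]; exact Int.le_ceil x
  have hNrpow : (q:ℝ) ^ x = (N:ℝ) := Real.rpow_logb (by positivity) (ne_of_gt hbR) (by positivity)
  have hub : N ≤ q ^ k₀ := by
    have h1 : (N:ℝ) ≤ (q:ℝ) ^ (k₀:ℕ) := by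
      rw [← hNrpow, ← Real.rpow_natCast]
      exact Real.rpow_le_rpow_of_exponent_le hbR.le hxk
    exact_mod_cast h1
  have hlb : q ^ (k₀ - 1) < N := by
    have h3 : ((k₀ - 1 : ℕ) : ℝ) < x := by
      have h4 := Int.ceil_lt_add_one x
      rw [Nat.cast_sub hk01, hk0R]
      rw [← hkdef] at h4
      push_cast at h4 ⊢
      linarith
    have h5 : (q:ℝ) ^ (((k₀ - 1:ℕ)):ℝ) < (q:ℝ) ^ x := Real.rpow_lt_rpow_of_exponent_lt hbR h3
    rw [hNrpow, Real.rpow_natCast] at h5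
    exact_mod_cast h5
  constructor
  · -- construction of a separating set of the right size
    have hcards : Fintype.card (Sym F n) ≤ Fintype.card (Fin k₀ → F) := by
      rw [hcardSym, Fintype.card_fun, Fintype.card_fin, hF]
      exact hub
    obtain ⟨ι⟩ := Function.Embedding.nonempty_of_card_le hcards
    set P : Fin k₀ → MvPolynomial (Fin n) F :=
      fun i => polyOf (fun u => ι (tupleSym u) i) with hP
    have hPsym : ∀ i, (P i).IsSymmetric := fun i =>
      polyOf_symmetric _ (fun σ u => by rw [tupleSym_comp_perm])
    have hPeval : ∀ i u, MvPolynomial.eval u (P i) = ι (tupleSym u) i :=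
      fun i u => eval_polyOf _ _
    refine ⟨Set.range P, ⟨?_, ?_⟩, Set.finite_range P, ?_⟩
    · rintro f ⟨i, rfl⟩
      exact hPsym i
    · rintro u v ⟨f, hfsym, hfne⟩
      have hms : tupleSym u ≠ tupleSym v := by
        intro hcon
        obtain ⟨σ, rfl⟩ := exists_perm_of_msOf_eq (congrArg Sym.toMultiset hcon)
        exact hfne (IsSymmetric.eval_comp_perm' hfsym v σ)
      have hι : ι (tupleSym u) ≠ ι (tupleSym v) := fun h => hms (ι.injective h)
      obtain ⟨i, hi⟩ := Function.ne_iff.mp hι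
      exact ⟨P i, ⟨i, rfl⟩, by rw [hPeval, hPeval]; exact hi⟩
    · have hPinj : Function.Injective P := by
        intro i j hij
        by_contra hne
        have hgeq : ∀ s : Sym F n, ι s i = ι s j := by
          intro s
          obtain ⟨u, rfl⟩ := tupleSym_surjective s
          have h6 := congrArg (MvPolynomial.eval u) hij
          rwa [hPeval, hPeval] at h6
        have hinj2 : Function.Injective
            (fun (s : Sym F n) (y : {y : Fin k₀ // ¬ (y = j)}) => ι s y.val) := by
          intro s s' hss'
          apply ι.injective
          funext y
          by_cases hy : y = j
          · subst hy
            have h7 := congrFun hss' ⟨i, hne⟩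
            simp only at h7
            rw [← hgeq s, h7, hgeq s']
          · exact congrFun hss' ⟨y, hy⟩
        have hcard2 := Fintype.card_le_of_injective _ hinj2
        rw [hcardSym, Fintype.card_fun] at hcard2
        have hsub : Fintype.card {y : Fin k₀ // ¬ (y = j)} = k₀ - 1 := by
          rw [Fintype.card_subtype_compl, Fintype.card_subtype_eq, Fintype.card_fin]
        rw [hsub, hF] at hcard2
        omega
      have h8 : (Set.range P).ncard = k₀ := by
        rw [← Set.image_univ, Set.ncard_image_of_injective _ hPinj, Set.ncard_univ,
          Nat.card_eq_fintype_card, Fintype.card_fin]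
      rw [h8, hk0k]
  · -- lower bound
    intro S hS hfin
    haveI := hfin.fintype
    obtain ⟨w, hw⟩ := Function.Surjective.hasRightInverse
      (tupleSym_surjective (F := F) (n := n))
    have hinj : Function.Injective
        (fun s : Sym F n => fun f : ↥S => MvPolynomial.eval (w s) (f : MvPolynomial (Fin n) F)) := by
      intro s s' h
      by_contra hne
      have hms : msOf (w s) ≠ msOf (w s') := by
        intro hm
        exact hne (by rw [← hw s, ← hw s']; exact Subtype.ext hm)
      have hex : ∃ f : MvPolynomial (Fin n) F, f.IsSymmetric ∧
          MvPolynomial.eval (w s) f ≠ MvPolynomial.eval (w s') f := by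
        by_contra hall
        push_neg at hall
        exact hms (msOf_eq_of_esymm_eq fun t ht1 ht2 =>
          hall _ (MvPolynomial.esymm_isSymmetric (Fin n) F t))
      obtain ⟨f, hfS, hfne⟩ := hS.2 _ _ hex
      exact hfne (congrFun h ⟨f, hfS⟩)
    have hcard := Fintype.card_le_of_injective _ hinj
    rw [hcardSym, Fintype.card_fun, hF] at hcard
    have hSn : Fintype.card ↥S = S.ncard := by
      rw [Set.ncard_eq_toFinset_card', Set.toFinset_card]
    rw [hSn] at hcard
    have h9 : (N:ℝ) ≤ (q:ℝ) ^ ((S.ncard : ℕ):ℝ) := by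
      rw [Real.rpow_natCast]
      exact_mod_cast hcard
    have h10 : x ≤ ((S.ncard : ℕ):ℝ) :=
      (Real.logb_le_iff_le_rpow hbR (by positivity)).mpr h9
    refine Int.ceil_le.mpr ?_
    push_cast
    exact h10
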